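/- Equation (A.6): for all x, y ∈ (ℝ_{>0})^n (indices modulo n, n ≥ 3), define the tropical R image x'_i = x_i·Q_i(x,y)/Q_{i−1}(x,y) and y'_i = y_i·Q_{i−1}(x,y)/Q_i(x,y). Then for every i, x_i + y_{i+1} = x'_{i+1} + y'_i. -/

import Mathlib

/- Tropical (geometric-lift) setting for the combinatorial R- and K-matrices of
Kuniba–Okado–Yamada, "Box-Ball System with Reflecting End", Appendix A.
Vectors are real-valued, indexed by `ZMod n` (coordinates modulo `n`), and
`Qr x y i` is the subtraction-free polynomial
`Q_i(x,y) = Σ_{k=1}^{n} (Π_{j=1}^{k−1} x_{i+j}) (Π_{j=k+1}^{n} y_{i+j})`,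
the geometric lift (by `(min,+) → (+,×)`) of the piecewise-linear energy. -/

namespace BBST

abbrev W (n : ℕ) := ZMod n → ℝ

variable {n : ℕ}

/-- The tropical energy polynomial
`Q_i(x,y) = Σ_{k=1}^{n} (Π_{j=1}^{k−1} x_{i+j}) · (Π_{j=k+1}^{n} y_{i+j})`. -/
def Qr (x y : W n) (i : ZMod n) : ℝ :=
  ∑ k ∈ Finset.range n,
    (∏ j ∈ Finset.range k, x (i + (j : ZMod n) + 1)) *
      ∏ j ∈ Finset.Ico (k + 1) n, y (i + (j : ZMod n) + 1)

end BBST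

namespace BBST

lemma Qr_pos {n : ℕ} (hn : 0 < n) (x y : W n) (hx : ∀ i, 0 < x i) (hy : ∀ i, 0 < y i)
    (i : ZMod n) : 0 < Qr x y i := by
  apply Finset.sum_pos
  · exact fun k _ => mul_pos (Finset.prod_pos fun j _ => hx _)
      (Finset.prod_pos fun j _ => hy _)
  · exact Finset.nonempty_range_iff.mpr hn.ne'

lemma key {n : ℕ} (hn : 1 ≤ n) (x y : W n) (i : ZMod n) :
    x (i+1) * Qr x y (i+1) + y i * Qr x y (i-1)
      = (x i + y (i+1)) * Qr x y i := by
  obtain ⟨m, rfl⟩ : ∃ m, n = m + 1 := ⟨n - 1, by omega⟩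
  set X : ℕ → ℝ := fun j => x (i + (j : ZMod (m+1)) + 1) with hX
  set Y : ℕ → ℝ := fun j => y (i + (j : ZMod (m+1)) + 1) with hY
  set F : ℕ → ℝ := fun k =>
    (∏ j ∈ Finset.range k, X j) * ∏ j ∈ Finset.Ico (k+1) (m+1), Y j with hF
  have hQi : Qr x y i = ∑ k ∈ Finset.range (m+1), F k := rfl
  have hcast : ((m : ZMod (m+1)) + 1) = 0 := by
    have := ZMod.natCast_self (m+1); push_cast at this; exact this
  have hX0 : X 0 = x (i+1) := by simp [hX]
  have hY0 : Y 0 = y (i+1) := by simp [hY]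
  have hXm : X m = x i := by
    simp only [hX]; congr 1; rw [add_assoc, hcast, add_zero]
  have hYm : Y m = y i := by
    simp only [hY]; congr 1; rw [add_assoc, hcast, add_zero]
  -- Part A : x(i+1) * Q_{i+1}
  have hA : x (i+1) * Qr x y (i+1)
      = y (i+1) * (Qr x y i - F 0) + ∏ j ∈ Finset.range (m+1), X j := by
    have e1 : Qr x y (i+1) = ∑ k ∈ Finset.range (m+1),
        (∏ j ∈ Finset.range k, X (j+1)) * ∏ j ∈ Finset.Ico (k+1) (m+1), Y (j+1) := by
      unfold Qr
      refine Finset.sum_congr rfl fun k _ => ?_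
      congr 1
      · refine Finset.prod_congr rfl fun j _ => ?_
        simp only [hX]; congr 1; push_cast; ring
      · refine Finset.prod_congr rfl fun j _ => ?_
        simp only [hY]; congr 1; push_cast; ring
    rw [e1, Finset.mul_sum]
    have e2 : ∀ k ∈ Finset.range (m+1),
        x (i+1) * ((∏ j ∈ Finset.range k, X (j+1)) * ∏ j ∈ Finset.Ico (k+1) (m+1), Y (j+1))
          = (∏ j ∈ Finset.range (k+1), X j) * ∏ j ∈ Finset.Ico (k+2) (m+2), Y j := by
      intro k _
      have ex : ∏ j ∈ Finset.range (k+1), X j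
          = (∏ j ∈ Finset.range k, X (j+1)) * x (i+1) := by
        rw [Finset.prod_range_succ', hX0]
      have ey : ∏ j ∈ Finset.Ico (k+1) (m+1), Y (j+1)
          = ∏ j ∈ Finset.Ico (k+2) (m+2), Y j := by
        rw [Finset.prod_Ico_eq_prod_range, Finset.prod_Ico_eq_prod_range]
        have h2 : m + 2 - (k + 2) = m + 1 - (k + 1) := by omega
        rw [h2]
        refine Finset.prod_congr rfl fun j _ => ?_
        congr 1; omega
      rw [ex, ey]; ring
    rw [Finset.sum_congr rfl e2, Finset.sum_range_succ]
    have elast : ∏ j ∈ Finset.Ico (m+1+1) (m+2), Y j = 1 := by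
      simp
    rw [elast, mul_one]
    congr 1
    have e3 : ∀ k ∈ Finset.range m,
        (∏ j ∈ Finset.range (k+1), X j) * ∏ j ∈ Finset.Ico (k+2) (m+2), Y j
          = y (i+1) * F (k+1) := by
      intro k hk
      rw [Finset.mem_range] at hk
      rw [Finset.prod_Ico_succ_top (by omega : k + 2 ≤ m + 1)]
      have : Y (m+1) = y (i+1) := by
        simp only [hY]; congr 1; push_cast [hcast]
        rw [add_assoc]
        norm_num
      rw [this]
      simp only [hF]; ring
    rw [Finset.sum_congr rfl e3, ← Finset.mul_sum]
    congr 1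
    have := Finset.sum_range_succ' F m
    rw [hQi, this]; ring
  -- Part B : y i * Q_{i-1}
  have hB : y i * Qr x y (i-1)
      = x i * (Qr x y i - F m) + ∏ j ∈ Finset.range (m+1), Y j := by
    have e1 : Qr x y (i-1) = ∑ k ∈ Finset.range (m+1),
        (∏ j ∈ Finset.range k, x (i + (j : ZMod (m+1)))) *
          ∏ j ∈ Finset.Ico (k+1) (m+1), y (i + (j : ZMod (m+1))) := by
      unfold Qr
      refine Finset.sum_congr rfl fun k _ => ?_
      congr 1
      · refine Finset.prod_congr rfl fun j _ => ?_
        congr 1; ring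
      · refine Finset.prod_congr rfl fun j _ => ?_
        congr 1; ring
    rw [e1, Finset.mul_sum, Finset.sum_range_succ']
    have e0 : y i * ((∏ j ∈ Finset.range 0, x (i + (j : ZMod (m+1)))) *
        ∏ j ∈ Finset.Ico (0+1) (m+1), y (i + (j : ZMod (m+1))))
          = ∏ j ∈ Finset.range (m+1), Y j := by
      rw [Finset.prod_range_zero, one_mul, Finset.prod_range_succ, hYm]
      have : ∏ j ∈ Finset.Ico (0+1) (m+1), y (i + (j : ZMod (m+1)))
          = ∏ j ∈ Finset.range m, Y j := by
        rw [Finset.prod_Ico_eq_prod_range]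
        simp only [Nat.add_sub_cancel]
        refine Finset.prod_congr rfl fun j _ => ?_
        simp only [hY]; congr 1; push_cast; ring
      rw [this]; ring
    have e3 : ∀ k ∈ Finset.range m,
        y i * ((∏ j ∈ Finset.range (k+1), x (i + (j : ZMod (m+1)))) *
          ∏ j ∈ Finset.Ico (k+1+1) (m+1), y (i + (j : ZMod (m+1))))
            = x i * F k := by
      intro k hk
      rw [Finset.mem_range] at hk
      have ex : ∏ j ∈ Finset.range (k+1), x (i + (j : ZMod (m+1)))
          = (∏ j ∈ Finset.range k, X j) * x i := by
        rw [Finset.prod_range_succ']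
        congr 1
        · refine Finset.prod_congr rfl fun j _ => ?_
          simp only [hX]; congr 1; push_cast; ring
        · norm_num
      have ey : ∏ j ∈ Finset.Ico (k+2) (m+1), y (i + (j : ZMod (m+1)))
          = ∏ j ∈ Finset.Ico (k+1) m, Y j := by
        rw [Finset.prod_Ico_eq_prod_range, Finset.prod_Ico_eq_prod_range]
        have h2 : m + 1 - (k + 2) = m - (k + 1) := by omega
        rw [h2]
        refine Finset.prod_congr rfl fun j _ => ?_
        simp only [hY]; congr 1; push_cast; ring
      have eyy : y i * ∏ j ∈ Finset.Ico (k+1) m, Y j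
          = ∏ j ∈ Finset.Ico (k+1) (m+1), Y j := by
        rw [Finset.prod_Ico_succ_top (by omega : k + 1 ≤ m), hYm]; ring
      rw [ex, ey]
      simp only [hF]
      rw [← eyy]; ring
    rw [Finset.sum_congr rfl e3, e0, ← Finset.mul_sum]
    have e4 : ∑ k ∈ Finset.range m, F k = Qr x y i - F m := by
      rw [hQi, Finset.sum_range_succ]; ring
    rw [e4]
  -- combine
  have hF0 : y (i+1) * F 0 = ∏ j ∈ Finset.range (m+1), Y j := by
    have h01 : ∏ j ∈ Finset.Ico 1 (m+1), Y j = ∏ j ∈ Finset.range m, Y (j+1) := by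
      rw [Finset.prod_Ico_eq_prod_range]
      simp only [Nat.add_sub_cancel]
      exact Finset.prod_congr rfl fun j _ => by congr 1; omega
    simp only [hF, Finset.prod_range_zero, one_mul, Nat.zero_add]
    rw [h01, Finset.prod_range_succ', hY0]
    ring
  have hFm : x i * F m = ∏ j ∈ Finset.range (m+1), X j := by
    simp only [hF]
    rw [Finset.Ico_self, Finset.prod_empty, mul_one, Finset.prod_range_succ, hXm]
    ring
  rw [hA, hB]
  linear_combination -hF0 - hFm

/-- eq. (A.6): for all positive `x, y ∈ ℝ^n`, with tropical `R`-image
`x'_i = x_i·Q_i/Q_{i−1}`, `y'_i = y_i·Q_{i−1}/Q_i`, one has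
`x_i + y_{i+1} = x'_{i+1} + y'_i` for every `i`. -/
theorem eqA6 (n : ℕ) (hn : 3 ≤ n) (x y : W n)
    (hx : ∀ i, 0 < x i) (hy : ∀ i, 0 < y i) (i : ZMod n) :
    x i + y (i + 1) =
      x (i + 1) * Qr x y (i + 1) / Qr x y i + y i * Qr x y (i - 1) / Qr x y i := by
  have hQ := Qr_pos (by omega) x y hx hy i
  rw [← add_div, eq_div_iff hQ.ne']
  linear_combination - key (by omega) x y i

end BBST
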